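/- There exists a constant C > 0 such that for all m ≥ 0, s ∈ ℕ with 1 ≤ s ≤ n, and B > 0: if m satisfies m - tanh(m) = (s/n)(tanh(m + B) - tanh(m)), then m - tanh(m) ≥ C·(s/n)·tanh(B). In particular, using m - tanh(m) ≤ m³, one gets m³ ≥ C·(s/n)·tanh(B). -/
import Mathlib

open Real

lemma tanh_lt_one' (x : ℝ) : Real.tanh x < 1 := by
  rw [Real.tanh_eq_sinh_div_cosh, div_lt_one (Real.cosh_pos x)]
  nlinarith [Real.cosh_sub_sinh x, Real.exp_pos (-x)]

lemma tanh_sub' (a b : ℝ) :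
    Real.tanh a - Real.tanh b = Real.sinh (a - b) / (Real.cosh a * Real.cosh b) := by
  rw [Real.tanh_eq_sinh_div_cosh, Real.tanh_eq_sinh_div_cosh, Real.sinh_sub]
  field_simp

lemma cosh_le_inv_one_sub_sq {x : ℝ} (h0 : 0 ≤ x) (h1 : x ≤ 1) :
    (1 - x ^ 2) * Real.cosh x ≤ 1 := by
  have hmul : Real.exp x * Real.exp (-x) = 1 := by
    rw [← Real.exp_add]; simp
  have he1 : Real.exp x * (1 - x) ≤ 1 := by
    have h := Real.add_one_le_exp (-x)
    nlinarith [Real.exp_pos x]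
  have he2 : Real.exp (-x) * (1 + x) ≤ 1 := by
    have h := Real.add_one_le_exp x
    nlinarith [Real.exp_pos (-x)]
  rw [Real.cosh_eq]
  nlinarith [mul_le_mul_of_nonneg_left he1 (by linarith : (0:ℝ) ≤ 1 + x),
    mul_le_mul_of_nonneg_left he2 (by linarith : (0:ℝ) ≤ 1 - x)]

lemma tanh_ge_cubic {x : ℝ} (h0 : 0 ≤ x) (h1 : x ≤ 1) : x - x ^ 3 ≤ Real.tanh x := by
  rw [Real.tanh_eq_sinh_div_cosh, le_div_iff₀ (Real.cosh_pos x)]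
  have hs : x ≤ Real.sinh x := by
    rcases eq_or_lt_of_le h0 with rfl | h0
    · simp
    · exact (Real.self_lt_sinh_iff.2 h0).le
  have hc := cosh_le_inv_one_sub_sq h0 h1
  calc (x - x ^ 3) * Real.cosh x = x * ((1 - x ^ 2) * Real.cosh x) := by ring
    _ ≤ x * 1 := mul_le_mul_of_nonneg_left hc h0
    _ = x := mul_one x
    _ ≤ Real.sinh x := hs

theorem fixed_point_signal_lower_bound :
    ∃ C : ℝ, 0 < C ∧ ∀ (n s : ℕ) (m B : ℝ), 0 ≤ m → 1 ≤ s → s ≤ n → 0 < B →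
      m - Real.tanh m = ((s : ℝ) / n) * (Real.tanh (m + B) - Real.tanh m) →
      m - Real.tanh m ≥ C * ((s : ℝ) / n) * Real.tanh B ∧
      m ^ 3 ≥ C * ((s : ℝ) / n) * Real.tanh B := by
  refine ⟨1/8, by norm_num, fun n s m B hm hs hsn hB heq => ?_⟩
  have hn : 0 < (n : ℝ) := by
    have : 1 ≤ n := le_trans hs hsn
    exact_mod_cast Nat.lt_of_lt_of_le Nat.zero_lt_one this
  have hr0 : 0 < (s : ℝ) / n := div_pos (by exact_mod_cast hs) hn
  have hr1 : (s : ℝ) / n ≤ 1 := (div_le_one hn).2 (by exact_mod_cast hsn)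
  have hdiff : Real.tanh (m + B) - Real.tanh m
      = Real.sinh B / (Real.cosh (m + B) * Real.cosh m) := by
    have := tanh_sub' (m + B) m
    simpa using this
  have hsinhB : 0 < Real.sinh B := Real.sinh_pos_iff.2 hB
  have hcoshmB : 0 < Real.cosh (m + B) := Real.cosh_pos _
  have hcoshm : 0 < Real.cosh m := Real.cosh_pos _
  have hdpos : 0 < Real.tanh (m + B) - Real.tanh m := by
    rw [hdiff]
    exact div_pos hsinhB (mul_pos hcoshmB hcoshm)
  have hm1 : m ≤ 1 := by
    have h1 : m - Real.tanh m ≤ Real.tanh (m + B) - Real.tanh m := by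
      rw [heq]
      nlinarith [hdpos]
    have h2 : Real.tanh (m + B) < 1 := tanh_lt_one' (m + B)
    linarith
  have hcosh1 : Real.cosh 1 ≤ 2 := by
    rw [Real.cosh_eq]
    have h1 : Real.exp 1 < 2.7182818286 := Real.exp_one_lt_d9
    have h2 : Real.exp (-1 : ℝ) ≤ 1 := by
      rw [Real.exp_le_one_iff]; norm_num
    linarith
  have hcm2 : Real.cosh m ≤ 2 := by
    calc Real.cosh m ≤ Real.cosh 1 := by
          rw [Real.cosh_le_cosh, abs_of_nonneg hm, abs_of_nonneg (by norm_num : (0:ℝ) ≤ 1)]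
          exact hm1
      _ ≤ 2 := hcosh1
  have hsm : Real.sinh m ≤ Real.cosh m := by
    nlinarith [Real.cosh_sub_sinh m, Real.exp_pos (-m)]
  have hsB : Real.sinh B ≤ Real.cosh B := by
    nlinarith [Real.cosh_sub_sinh B, Real.exp_pos (-B)]
  have hsmn : 0 ≤ Real.sinh m := Real.sinh_nonneg_iff.2 hm
  have hcoshB : 0 < Real.cosh B := Real.cosh_pos _
  have hadd : Real.cosh (m + B) ≤ 2 * Real.cosh m * Real.cosh B := by
    rw [Real.cosh_add]
    nlinarith [mul_le_mul hsm hsB hsinhB.le hcoshm.le]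
  have hprod : Real.cosh (m + B) * Real.cosh m ≤ 8 * Real.cosh B := by
    nlinarith
  have h1 : m - Real.tanh m ≥ (1/8) * ((s : ℝ) / n) * Real.tanh B := by
    rw [heq, hdiff, Real.tanh_eq_sinh_div_cosh]
    rw [ge_iff_le, mul_comm ((1:ℝ)/8) _, mul_assoc]
    apply mul_le_mul_of_nonneg_left _ hr0.le
    calc (1:ℝ)/8 * (Real.sinh B / Real.cosh B) = Real.sinh B / (8 * Real.cosh B) := by
          ring
      _ ≤ Real.sinh B / (Real.cosh (m + B) * Real.cosh m) := by
          rw [div_le_div_iff₀ (by positivity) (mul_pos hcoshmB hcoshm)]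
          nlinarith [mul_le_mul_of_nonneg_left hprod hsinhB.le]
  refine ⟨h1, ?_⟩
  have h2 : m - Real.tanh m ≤ m ^ 3 := by
    have := tanh_ge_cubic hm hm1
    linarith
  linarith
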